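/- Let G be a simple graph on a finite vertex type α in which every vertex has even degree and whose maximum degree equals 4, and let {F₁, F₂, F₃} be a linear forest odd-cover of G, where each F_i has no isolated vertices. For distinct i, j ∈ {1,2,3}, let R_{ij} := end(F_i) ∩ end(F_j) and r_{ij} := |R_{ij}|, where end(F) is the set of vertices of degree 1 in F. For distinct i, j, k ∈ {1,2,3}, let t_i be the number of connected components of F_i having one degree-1 vertex in R_{ij} and the other degree-1 vertex in R_{ik}. Then r₁₂ ≡ r₁₃ ≡ r₂₃ ≡ t₁ ≡ t₂ ≡ t₃ (mod 2). -/
import Mathlib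

/-- The degree of a vertex, as the cardinality of its neighbor set. -/
noncomputable def degS {α : Type*} (G : SimpleGraph α) (v : α) : ℕ := (G.neighborSet v).ncard

/-- A polycycle: every vertex has degree 0 or 2 (every component is a cycle). -/
def IsPolycycle {α : Type*} (G : SimpleGraph α) : Prop :=
  ∀ v, degS G v = 0 ∨ degS G v = 2

/-- A cycle graph: a nonempty connected graph in which every non-isolated vertex
has degree 2. -/
def IsCycleGraph {α : Type*} (G : SimpleGraph α) : Prop :=
  G ≠ ⊥ ∧ (∀ v, degS G v = 0 ∨ degS G v = 2) ∧
    ∀ u v, 0 < degS G u → 0 < degS G v → G.Reachable u v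

/-- A path graph: a graph whose edge set forms a nontrivial path. -/
def IsPathGraph {α : Type*} (G : SimpleGraph α) : Prop :=
  G ≠ ⊥ ∧ G.IsAcyclic ∧ (∀ v, degS G v ≤ 2) ∧
    ∀ u v, 0 < degS G u → 0 < degS G v → G.Reachable u v

/-- A linear forest: an acyclic graph of maximum degree at most 2. -/
def IsLinearForest {α : Type*} (G : SimpleGraph α) : Prop :=
  G.IsAcyclic ∧ ∀ v, degS G v ≤ 2

/-- The symmetric difference of a family (list) of graphs: an edge belongs to it
iff it belongs to an odd number of members. -/
def listSymmDiff {α : Type*} (L : List (SimpleGraph α)) : SimpleGraph α :=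
  L.foldr symmDiff ⊥

/-- The set of endpoints (degree-1 vertices) of a linear forest. -/
noncomputable def endSet {α : Type*} (F : SimpleGraph α) : Set α :=
  {v | degS F v = 1}

/-- The number of connected components of `F` having one degree-1 vertex in
`end(F) ∩ end(Fj)` and another in `end(F) ∩ end(Fk)`. -/
noncomputable def tcount {α : Type*} (F Fj Fk : SimpleGraph α) : ℕ :=
  {c : F.ConnectedComponent | ∃ a b, a ≠ b ∧ a ∈ c.supp ∧ b ∈ c.supp ∧
    a ∈ endSet F ∩ endSet Fj ∧ b ∈ endSet F ∩ endSet Fk}.ncard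

/-! ### Auxiliary lemmas -/

lemma degS_eq_degree {α : Type*} [Fintype α] (G : SimpleGraph α) [DecidableRel G.Adj] (v : α) :
    degS G v = G.degree v := by
  rw [degS, SimpleGraph.degree, ← Set.ncard_coe_finset]
  congr 1
  simp [SimpleGraph.neighborFinset]

lemma degS_symmDiff_parity {α : Type*} [Fintype α] (A B : SimpleGraph α) (v : α) :
    degS (symmDiff A B) v % 2 = (degS A v + degS B v) % 2 := by
  classical
  set sA := A.neighborSet v with hsA
  set sB := B.neighborSet v with hsB
  have hset : (symmDiff A B).neighborSet v = (sA \ sB) ∪ (sB \ sA) := by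
    ext w
    simp only [symmDiff_def, SimpleGraph.mem_neighborSet, hsA, hsB, Set.mem_diff,
      SimpleGraph.sup_adj, SimpleGraph.sdiff_adj, Set.mem_union]
  have hdisj : Disjoint (sA \ sB) (sB \ sA) := by
    apply Set.disjoint_left.2
    rintro x ⟨_, hx⟩ ⟨hx', _⟩
    exact hx hx'
  have h1 : degS (symmDiff A B) v = (sA \ sB).ncard + (sB \ sA).ncard := by
    rw [degS, hset, Set.ncard_union_eq hdisj (Set.toFinite _) (Set.toFinite _)]
  have h2 := Set.ncard_inter_add_ncard_diff_eq_ncard sA sB (Set.toFinite _)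
  have h3 := Set.ncard_inter_add_ncard_diff_eq_ncard sB sA (Set.toFinite _)
  have h4 : (sA ∩ sB).ncard = (sB ∩ sA).ncard := by rw [Set.inter_comm]
  show _ = (sA.ncard + sB.ncard) % 2
  omega

open SimpleGraph

section comp
variable {α : Type*} {F : SimpleGraph α}

lemma walk_reachable_induce {s : Set α} (hcl : ∀ a b, a ∈ s → F.Adj a b → b ∈ s) :
    ∀ {u v : α} (_ : F.Walk u v) (hu : u ∈ s),
      ∃ hv : v ∈ s, (F.induce s).Reachable ⟨u, hu⟩ ⟨v, hv⟩ := by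
  intro u v p
  induction p with
  | nil => exact fun hu => ⟨hu, Reachable.refl _⟩
  | cons h q ih =>
    intro hu
    have hb := hcl _ _ hu h
    obtain ⟨hv, hr⟩ := ih hb
    exact ⟨hv, Reachable.trans (SimpleGraph.Adj.reachable (by exact h)) hr⟩

lemma supp_closed (c : F.ConnectedComponent) :
    ∀ a b, a ∈ c.supp → F.Adj a b → b ∈ c.supp := by
  intro a b ha hab
  rw [SimpleGraph.ConnectedComponent.mem_supp_iff] at *
  rw [← ha]
  exact SimpleGraph.ConnectedComponent.sound hab.symm.reachable

lemma endpoints_per_component [Fintype α] (hF : IsLinearForest F) (c : F.ConnectedComponent) :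
    (endSet F ∩ c.supp).ncard = 0 ∨ (endSet F ∩ c.supp).ncard = 2 := by
  classical
  set s := c.supp with hs
  set H := F.induce s with hH
  have hdeg : ∀ v : s, degS H v = degS F ↑v := by
    intro v
    have himg : F.neighborSet ↑v = Subtype.val '' (H.neighborSet v) := by
      ext w
      constructor
      · intro hw
        have hws : w ∈ s := supp_closed c v.1 w v.2 hw
        exact ⟨⟨w, hws⟩, by exact hw, rfl⟩
      · rintro ⟨w', hw', rfl⟩
        exact hw'
    rw [degS, degS, himg, Set.ncard_image_of_injective _ Subtype.val_injective]
  have hne : s.Nonempty := by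
    obtain ⟨v, hv⟩ := c.exists_rep
    exact ⟨v, (SimpleGraph.ConnectedComponent.mem_supp_iff _ _).2 hv⟩
  haveI : Nonempty s := hne.to_subtype
  have hconn : H.Connected := by
    refine ⟨fun u v => ?_⟩
    have hr : F.Reachable ↑u ↑v := by
      have hu := (SimpleGraph.ConnectedComponent.mem_supp_iff _ _).1 u.2
      have hv := (SimpleGraph.ConnectedComponent.mem_supp_iff _ _).1 v.2
      exact SimpleGraph.ConnectedComponent.exact (hu.trans hv.symm)
    obtain ⟨p⟩ := hr
    obtain ⟨hv, hr'⟩ := walk_reachable_induce (supp_closed c) p u.2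
    exact hr'
  have hacyc : H.IsAcyclic := by
    intro v w hw
    have hinj : Function.Injective (SimpleGraph.Embedding.induce (G := F) s).toHom :=
      (SimpleGraph.Embedding.induce (G := F) s).injective
    exact hF.1 _ (hw.map hinj)
  have htree : H.IsTree := ⟨hconn, hacyc⟩
  have hcard := htree.card_edgeFinset
  have hsum := SimpleGraph.sum_degrees_eq_twice_card_edges H
  set n := Fintype.card s with hn
  by_cases hn1 : n = 1
  · left
    rw [Set.ncard_eq_zero (Set.toFinite _)]
    by_contra hnem
    obtain ⟨v, hv1, hv2⟩ := Set.nonempty_iff_ne_empty.2 hnem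
    have hd1 : degS F v = 1 := hv1
    have hdv : degS H ⟨v, hv2⟩ = 1 := by rw [hdeg]; exact hd1
    rw [degS_eq_degree] at hdv
    obtain ⟨w, hw⟩ := (SimpleGraph.degree_pos_iff_exists_adj H ⟨v, hv2⟩).1 (by omega)
    have h2 : 1 < n := Fintype.one_lt_card_iff.2 ⟨_, _, hw.ne⟩
    omega
  · right
    have hn2 : 2 ≤ n := by
      have : 0 < n := Fintype.card_pos
      omega
    have hdle : ∀ v : s, H.degree v ≤ 2 := by
      intro v; rw [← degS_eq_degree, hdeg]; exact hF.2 v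
    have hdge : ∀ v : s, 1 ≤ H.degree v := by
      intro v
      obtain ⟨u, hu⟩ := Fintype.exists_ne_of_one_lt_card (by omega) v
      obtain ⟨p⟩ := hconn.preconnected v u
      cases p with
      | nil => exact absurd rfl hu.symm
      | cons h q => exact (SimpleGraph.degree_pos_iff_exists_adj H v).2 ⟨_, h⟩
    set L := (Finset.univ.filter fun v : s => H.degree v = 1).card with hL
    have hsplit : ∑ v : s, H.degree v = L + 2 * (n - L) := by
      rw [← Finset.sum_filter_add_sum_filter_not Finset.univ (fun v : s => H.degree v = 1)]
      have e1 : ∑ v ∈ Finset.univ.filter (fun v : s => H.degree v = 1), H.degree v = L := by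
        rw [hL, Finset.card_eq_sum_ones]
        exact Finset.sum_congr rfl fun x hx => (Finset.mem_filter.1 hx).2
      have e2 : ∑ v ∈ Finset.univ.filter (fun v : s => ¬ H.degree v = 1), H.degree v
          = 2 * (n - L) := by
        have hall : ∀ x ∈ Finset.univ.filter (fun v : s => ¬ H.degree v = 1), H.degree x = 2 := by
          intro x hx
          have := hdle x; have := hdge x; have := (Finset.mem_filter.1 hx).2
          omega
        rw [Finset.sum_congr rfl hall, Finset.sum_const, smul_eq_mul, mul_comm]
        congr 1
        have hsum2 := Finset.card_filter_add_card_filter_not (s := (Finset.univ : Finset s))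
          (p := fun v : s => H.degree v = 1)
        simp only [Finset.card_univ] at hsum2
        omega
      rw [e1, e2]
    have hLn : L ≤ n := by
      have := Finset.card_filter_le (Finset.univ : Finset s) (fun v : s => H.degree v = 1)
      simpa [hL, hn] using this
    have hL2 : L = 2 := by omega
    have himg : endSet F ∩ s = Subtype.val '' {v : s | H.degree v = 1} := by
      ext w
      constructor
      · rintro ⟨hw1, hw2⟩
        refine ⟨⟨w, hw2⟩, ?_, rfl⟩
        show H.degree _ = 1
        rw [← degS_eq_degree, hdeg]
        exact hw1
      · rintro ⟨w', hw', rfl⟩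
        refine ⟨?_, w'.2⟩
        show degS F ↑w' = 1
        rw [← hdeg, degS_eq_degree]
        exact hw'
    rw [himg, Set.ncard_image_of_injective _ Subtype.val_injective, ← hL2, hL]
    rw [Set.ncard_eq_toFinset_card']
    congr 1
    ext x
    simp

lemma count_parity [Fintype α] (hF : IsLinearForest F)
    (P Q : Set α) (hPQ : Disjoint P Q) (hunion : P ∪ Q = endSet F) :
    P.ncard % 2 =
      {c : F.ConnectedComponent | ∃ a b, a ≠ b ∧ a ∈ c.supp ∧ b ∈ c.supp ∧
        a ∈ P ∧ b ∈ Q}.ncard % 2 := by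
  classical
  haveI : Fintype F.ConnectedComponent := Fintype.ofFinite _
  set T : Set F.ConnectedComponent :=
    {c | ∃ a b, a ≠ b ∧ a ∈ c.supp ∧ b ∈ c.supp ∧ a ∈ P ∧ b ∈ Q} with hT
  have key : ∀ c : F.ConnectedComponent,
      (P ∩ c.supp).ncard % 2 = (if c ∈ T then 1 else 0) := by
    intro c
    have hdisj : Disjoint (P ∩ c.supp) (Q ∩ c.supp) :=
      Disjoint.mono Set.inter_subset_left Set.inter_subset_left hPQ
    have hsum : (P ∩ c.supp).ncard + (Q ∩ c.supp).ncard = (endSet F ∩ c.supp).ncard := by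
      rw [← Set.ncard_union_eq hdisj (Set.toFinite _) (Set.toFinite _), ← hunion,
        Set.union_inter_distrib_right]
    have hec := endpoints_per_component hF c
    by_cases hc : c ∈ T
    · rw [if_pos hc]
      obtain ⟨a, b, hab, has, hbs, haP, hbQ⟩ := hc
      have h1 : 0 < (P ∩ c.supp).ncard :=
        (Set.ncard_pos (Set.toFinite _)).2 ⟨a, haP, has⟩
      have h2 : 0 < (Q ∩ c.supp).ncard :=
        (Set.ncard_pos (Set.toFinite _)).2 ⟨b, hbQ, hbs⟩
      omega
    · rw [if_neg hc]
      by_contra hodd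
      have h1 : 0 < (P ∩ c.supp).ncard := by omega
      obtain ⟨a, haP, has⟩ := (Set.ncard_pos (Set.toFinite _)).1 h1
      have h2 : 0 < (Q ∩ c.supp).ncard := by omega
      obtain ⟨b, hbQ, hbs⟩ := (Set.ncard_pos (Set.toFinite _)).1 h2
      exact hc ⟨a, b, fun h => Set.disjoint_left.1 hPQ haP (h ▸ hbQ), has, hbs, haP, hbQ⟩
  have hPcard : P.ncard = ∑ c : F.ConnectedComponent, (P ∩ c.supp).ncard := by
    rw [Set.ncard_eq_toFinset_card P (Set.toFinite P)]
    rw [Finset.card_eq_sum_card_fiberwise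
      (f := fun v => F.connectedComponentMk v) (t := Finset.univ)
      (fun x _ => Finset.mem_univ _)]
    refine Finset.sum_congr rfl fun c _ => ?_
    rw [Set.ncard_eq_toFinset_card _ (Set.toFinite _)]
    congr 1
    ext x
    simp only [Set.Finite.mem_toFinset, Finset.mem_filter, Set.mem_inter_iff,
      SimpleGraph.ConnectedComponent.mem_supp_iff]
  have hTcard : T.ncard = ∑ c : F.ConnectedComponent, (if c ∈ T then 1 else 0) := by
    rw [Set.ncard_eq_toFinset_card T (Set.toFinite T)]
    have he : (Set.toFinite T).toFinset = Finset.univ.filter (· ∈ T) := by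
      ext c
      simp only [Set.Finite.mem_toFinset, Finset.mem_filter, Finset.mem_univ, true_and]
    rw [he, Finset.card_filter]
  rw [hPcard, hTcard, Finset.sum_nat_mod]
  exact congrArg (· % 2) (Finset.sum_congr rfl fun c _ => key c)

lemma swapT (P Q : Set α) (F : SimpleGraph α) :
    {c : F.ConnectedComponent | ∃ a b, a ≠ b ∧ a ∈ c.supp ∧ b ∈ c.supp ∧ a ∈ P ∧ b ∈ Q} =
    {c : F.ConnectedComponent | ∃ a b, a ≠ b ∧ a ∈ c.supp ∧ b ∈ c.supp ∧ a ∈ Q ∧ b ∈ P} := by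
  ext c
  constructor <;> rintro ⟨a, b, h1, h2, h3, h4, h5⟩ <;> exact ⟨b, a, h1.symm, h3, h2, h5, h4⟩

lemma partition_help [Fintype α] (F A B : SimpleGraph α)
    (hA : ∀ v, degS A v ≤ 2) (hB : ∀ v, degS B v ≤ 2)
    (hd : ∀ v, (degS F v + degS A v + degS B v) % 2 = 0) :
    (endSet F ∩ endSet A) ∪ (endSet F ∩ endSet B) = endSet F ∧
      Disjoint (endSet F ∩ endSet A) (endSet F ∩ endSet B) := by
  constructor
  · ext v
    simp only [Set.mem_union, Set.mem_inter_iff, endSet, Set.mem_setOf_eq]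
    have := hd v; have := hA v; have := hB v
    omega
  · rw [Set.disjoint_left]
    rintro v ⟨h1, h2⟩ ⟨h3, h4⟩
    have := hd v
    simp only [endSet, Set.mem_setOf_eq] at h1 h2 h4
    omega

end comp

/-- Parity control for linear forest odd-covers of an Eulerian graph of maximum
degree 4: all the quantities `r₁₂, r₁₃, r₂₃, t₁, t₂, t₃` have the same parity. -/
theorem linear_forest_oddCover_parity
    {α : Type*} [Fintype α] (G F₁ F₂ F₃ : SimpleGraph α)
    (hEuler : ∀ v, Even (degS G v))
    (hle : ∀ v, degS G v ≤ 4) (hmax : ∃ v, degS G v = 4)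
    (h₁ : IsLinearForest F₁) (h₂ : IsLinearForest F₂) (h₃ : IsLinearForest F₃)
    (hcov : symmDiff F₁ (symmDiff F₂ F₃) = G) :
    (endSet F₁ ∩ endSet F₂).ncard % 2 = (endSet F₁ ∩ endSet F₃).ncard % 2 ∧
    (endSet F₁ ∩ endSet F₃).ncard % 2 = (endSet F₂ ∩ endSet F₃).ncard % 2 ∧
    (endSet F₂ ∩ endSet F₃).ncard % 2 = tcount F₁ F₂ F₃ % 2 ∧
    tcount F₁ F₂ F₃ % 2 = tcount F₂ F₁ F₃ % 2 ∧
    tcount F₂ F₁ F₃ % 2 = tcount F₃ F₁ F₂ % 2 := by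
  classical
  have hd : ∀ v, (degS F₁ v + degS F₂ v + degS F₃ v) % 2 = 0 := by
    intro v
    have h0 : degS G v % 2 = 0 := Nat.even_iff.1 (hEuler v)
    have e1 : degS G v % 2 = (degS F₁ v + degS (symmDiff F₂ F₃) v) % 2 := by
      rw [← hcov]; exact degS_symmDiff_parity _ _ v
    have e2 : degS (symmDiff F₂ F₃) v % 2 = (degS F₂ v + degS F₃ v) % 2 :=
      degS_symmDiff_parity _ _ v
    omega
  -- partitions
  obtain ⟨hu1, hdisj1⟩ := partition_help F₁ F₂ F₃ h₂.2 h₃.2 hd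
  obtain ⟨hu2, hdisj2⟩ := partition_help F₂ F₁ F₃ h₁.2 h₃.2
    (fun v => by have := hd v; omega)
  obtain ⟨hu3, hdisj3⟩ := partition_help F₃ F₁ F₂ h₁.2 h₂.2
    (fun v => by have := hd v; omega)
  -- F₁ : r₁₂ ≡ t₁ and r₁₃ ≡ t₁
  have c1P : (endSet F₁ ∩ endSet F₂).ncard % 2 = tcount F₁ F₂ F₃ % 2 :=
    count_parity h₁ _ _ hdisj1 hu1
  have c1Q : (endSet F₁ ∩ endSet F₃).ncard % 2 = tcount F₁ F₂ F₃ % 2 := by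
    have := count_parity h₁ _ _ hdisj1.symm (by rw [Set.union_comm]; exact hu1)
    rw [this, tcount, swapT]
  -- F₂ : r₁₂ ≡ t₂ and r₂₃ ≡ t₂
  have c2P : (endSet F₂ ∩ endSet F₁).ncard % 2 = tcount F₂ F₁ F₃ % 2 :=
    count_parity h₂ _ _ hdisj2 hu2
  have c2Q : (endSet F₂ ∩ endSet F₃).ncard % 2 = tcount F₂ F₁ F₃ % 2 := by
    have := count_parity h₂ _ _ hdisj2.symm (by rw [Set.union_comm]; exact hu2)
    rw [this, tcount, swapT]
  -- F₃ : r₁₃ ≡ t₃ and r₂₃ ≡ t₃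
  have c3P : (endSet F₃ ∩ endSet F₁).ncard % 2 = tcount F₃ F₁ F₂ % 2 :=
    count_parity h₃ _ _ hdisj3 hu3
  have c3Q : (endSet F₃ ∩ endSet F₂).ncard % 2 = tcount F₃ F₁ F₂ % 2 := by
    have := count_parity h₃ _ _ hdisj3.symm (by rw [Set.union_comm]; exact hu3)
    rw [this, tcount, swapT]
  rw [Set.inter_comm (endSet F₂) (endSet F₁)] at c2P
  rw [Set.inter_comm (endSet F₃) (endSet F₁)] at c3P
  rw [Set.inter_comm (endSet F₃) (endSet F₂)] at c3Q
  refine ⟨?_, ?_, ?_, ?_, ?_⟩ <;> omega
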